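/- Let q be a real number with 0 < q < 1, let x ≥ 0 be real, and let t be real. Then the series F_q(t,x) = ∑_{n=0}^∞ 𝓔_{n,q}(x) t^n/n! converges absolutely, for each z with 0 ≤ z < 1 the series ∑_{k=0}^∞ (−1)^k z^k exp([k+x]_q t) converges absolutely, and the Abel limit as z → 1⁻ of [2]_q ∑_{k=0}^∞ (−1)^k z^k exp([k+x]_q t) exists and equals F_q(t,x). (This is the precise meaning of the generating-function identity F_q(t,x) = [2]_q ∑_{k=0}^∞ (−1)^k e^{[k+x]_q t}.) -/

import Mathlib

/-- The modified `q`-Euler polynomials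
`𝓔_{n,q}(x) = [2]_q (1/(1-q))^n ∑_{l=0}^n C(n,l) (-1)^l q^{lx}/(1+q^l)`
(here `q ^ ((l : ℝ) * x)` is the real power `rpow`). -/
noncomputable def modqEulerPoly (q : ℝ) (n : ℕ) (x : ℝ) : ℝ :=
  (1 + q) * (1 / (1 - q)) ^ n *
    ∑ l ∈ Finset.range (n + 1),
      (n.choose l : ℝ) * (-1) ^ l * q ^ ((l : ℝ) * x) / (1 + q ^ l)

noncomputable def mqA (q x t z : ℝ) (n : ℕ) : ℝ :=
  (1 / (1 - q)) ^ n * t ^ n / (n.factorial : ℝ) *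
    ∑ l ∈ Finset.range (n + 1),
      (n.choose l : ℝ) * (-1) ^ l * q ^ ((l : ℝ) * x) / (1 + z * q ^ l)

section

variable {q x t : ℝ} (hq0 : 0 < q) (hq1 : q < 1) (hx : 0 ≤ x)

include hq0 hq1 hx in
lemma mqA_bound {z : ℝ} (hz : 0 ≤ z) (n : ℕ) :
    |mqA q x t z n| ≤ (2 * |t| / (1 - q)) ^ n / (n.factorial : ℝ) := by
  have hq' : (0:ℝ) < 1 - q := by linarith
  have h2 : |∑ l ∈ Finset.range (n + 1),
      (n.choose l : ℝ) * (-1) ^ l * q ^ ((l : ℝ) * x) / (1 + z * q ^ l)| ≤ 2 ^ n := by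
    calc |∑ l ∈ Finset.range (n + 1),
        (n.choose l : ℝ) * (-1) ^ l * q ^ ((l : ℝ) * x) / (1 + z * q ^ l)|
        ≤ ∑ l ∈ Finset.range (n + 1),
          |(n.choose l : ℝ) * (-1) ^ l * q ^ ((l : ℝ) * x) / (1 + z * q ^ l)| :=
        Finset.abs_sum_le_sum_abs _ _
      _ ≤ ∑ l ∈ Finset.range (n + 1), (n.choose l : ℝ) := by
          refine Finset.sum_le_sum fun l _ => ?_
          have hd : (0:ℝ) < 1 + z * q ^ l := by positivity
          have hr : (0:ℝ) < q ^ ((l : ℝ) * x) := Real.rpow_pos_of_pos hq0 _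
          rw [abs_div, abs_of_pos hd, abs_mul, abs_mul, abs_pow, abs_neg, abs_one, one_pow,
            mul_one, abs_of_pos hr, Nat.abs_cast]
          have h1d : (1:ℝ) ≤ 1 + z * q ^ l := by nlinarith [pow_pos hq0 l]
          have hro : q ^ ((l : ℝ) * x) ≤ 1 := Real.rpow_le_one hq0.le hq1.le (by positivity)
          calc (n.choose l : ℝ) * q ^ ((l : ℝ) * x) / (1 + z * q ^ l)
              ≤ (n.choose l : ℝ) * q ^ ((l : ℝ) * x) / 1 :=
                div_le_div_of_nonneg_left (by positivity) one_pos h1d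
            _ = (n.choose l : ℝ) * q ^ ((l : ℝ) * x) := div_one _
            _ ≤ (n.choose l : ℝ) * 1 := mul_le_mul_of_nonneg_left hro (by positivity)
            _ = (n.choose l : ℝ) := mul_one _
      _ = ((2:ℝ)) ^ n := by
          rw [← Nat.cast_sum, Nat.sum_range_choose]; push_cast; ring
  have h1 : |(1 / (1 - q)) ^ n * t ^ n / (n.factorial : ℝ)|
      = (1 / (1 - q)) ^ n * |t| ^ n / (n.factorial : ℝ) := by
    rw [abs_div, abs_mul, abs_pow, abs_pow, abs_of_nonneg (by positivity : (0:ℝ) ≤ 1/(1-q)),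
      abs_of_nonneg (by positivity : (0:ℝ) ≤ (n.factorial : ℝ))]
  rw [mqA, abs_mul, h1]
  calc (1 / (1 - q)) ^ n * |t| ^ n / (n.factorial : ℝ) * |_|
      ≤ (1 / (1 - q)) ^ n * |t| ^ n / (n.factorial : ℝ) * 2 ^ n :=
        mul_le_mul_of_nonneg_left h2 (by positivity)
    _ = (2 * |t| / (1 - q)) ^ n / (n.factorial : ℝ) := by
        rw [div_pow, one_pow, div_pow, mul_pow]; field_simp

end

section

variable {q x t : ℝ} (hq0 : 0 < q) (hq1 : q < 1) (hx : 0 ≤ x)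

include hq0 hq1 hx in
lemma mqA_hasSum {z : ℝ} (hz0 : 0 ≤ z) (hz1 : z < 1) (n : ℕ) :
    HasSum (fun k : ℕ => (-1) ^ k * z ^ k *
      ((1 - q ^ ((k : ℝ) + x)) / (1 - q) * t) ^ n / (n.factorial : ℝ)) (mqA q x t z n) := by
  have hq' : (0:ℝ) < 1 - q := by linarith
  set c : ℕ → ℝ := fun l => (1 / (1 - q)) ^ n * t ^ n / (n.factorial : ℝ) *
      ((n.choose l : ℝ) * (-1) ^ l * q ^ ((l : ℝ) * x)) with hc
  have hkey : ∀ k l : ℕ, q ^ (((k : ℝ) + x) * (l : ℝ))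
      = q ^ ((l : ℝ) * x) * ((q ^ l : ℝ)) ^ k := by
    intro k l
    have h1 : ((k:ℝ) + x) * (l:ℝ) = (l:ℝ) * x + (l:ℝ) * (k:ℝ) := by ring
    rw [h1, Real.rpow_add hq0]
    congr 1
    rw [Real.rpow_mul hq0.le, Real.rpow_natCast, Real.rpow_natCast]
  have hbin : ∀ k : ℕ, (1 - q ^ ((k:ℝ) + x)) ^ n
      = ∑ l ∈ Finset.range (n + 1),
          (-1) ^ l * q ^ ((l : ℝ) * x) * ((q ^ l : ℝ)) ^ k * (n.choose l : ℝ) := by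
    intro k
    rw [show (1 : ℝ) - q ^ ((k:ℝ) + x) = -(q ^ ((k:ℝ) + x)) + 1 by ring,
      add_pow]
    refine Finset.sum_congr rfl fun l hl => ?_
    rw [one_pow, mul_one, neg_pow]
    have h2 : (q ^ ((k:ℝ) + x)) ^ l = q ^ ((l:ℝ) * x) * ((q ^ l : ℝ)) ^ k := by
      rw [← Real.rpow_natCast (q ^ ((k:ℝ) + x)) l, ← Real.rpow_mul hq0.le, hkey]
    rw [h2]
    ring
  have hfun : ∀ k : ℕ, (-1) ^ k * z ^ k *
      ((1 - q ^ ((k : ℝ) + x)) / (1 - q) * t) ^ n / (n.factorial : ℝ)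
      = ∑ l ∈ Finset.range (n + 1), c l * (-(z * q ^ l)) ^ k := by
    intro k
    rw [mul_pow, div_pow, hbin k, Finset.sum_div, Finset.sum_mul, Finset.mul_sum,
      Finset.sum_div]
    refine Finset.sum_congr rfl fun l hl => ?_
    rw [hc]
    rw [neg_pow (z * q ^ l), mul_pow]
    ring
  have hgeo : ∀ l ∈ Finset.range (n + 1),
      HasSum (fun k : ℕ => c l * (-(z * q ^ l)) ^ k) (c l * (1 + z * q ^ l)⁻¹) := by
    intro l _
    have hnorm : ‖-(z * q ^ l)‖ < 1 := by
      rw [norm_neg, Real.norm_eq_abs, abs_of_nonneg (by positivity)]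
      calc z * q ^ l ≤ z * 1 :=
            mul_le_mul_of_nonneg_left (pow_le_one₀ hq0.le hq1.le) hz0
        _ < 1 := by linarith
    have := (hasSum_geometric_of_norm_lt_one hnorm).mul_left (c l)
    simpa [sub_neg_eq_add] using this
  have hmq : mqA q x t z n = ∑ l ∈ Finset.range (n + 1), c l * (1 + z * q ^ l)⁻¹ := by
    rw [mqA, Finset.mul_sum]
    exact Finset.sum_congr rfl fun l _ => by rw [hc]; ring
  rw [hmq]
  simp only [hfun]
  exact hasSum_sum hgeo

end

section

variable {q x t : ℝ} (hq0 : 0 < q) (hq1 : q < 1) (hx : 0 ≤ x)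

lemma mq_exp_hasSum (y : ℝ) :
    HasSum (fun n : ℕ => y ^ n / (n.factorial : ℝ)) (Real.exp y) := by
  have := NormedSpace.expSeries_div_hasSum_exp y
  rwa [← Real.exp_eq_exp_ℝ] at this

include hq0 hq1 hx in
lemma mqE_abs_le (k : ℕ) :
    |(1 - q ^ ((k : ℝ) + x)) / (1 - q) * t| ≤ |t| / (1 - q) := by
  have hq' : (0:ℝ) < 1 - q := by linarith
  have hr0 : (0:ℝ) < q ^ ((k : ℝ) + x) := Real.rpow_pos_of_pos hq0 _
  have hr1 : q ^ ((k : ℝ) + x) ≤ 1 := Real.rpow_le_one hq0.le hq1.le (by positivity)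
  have hE0 : 0 ≤ (1 - q ^ ((k : ℝ) + x)) / (1 - q) := by
    apply div_nonneg _ hq'.le; linarith
  have hE1 : (1 - q ^ ((k : ℝ) + x)) / (1 - q) ≤ 1 / (1 - q) := by
    gcongr <;> linarith
  rw [abs_mul, abs_of_nonneg hE0]
  calc (1 - q ^ ((k : ℝ) + x)) / (1 - q) * |t| ≤ 1 / (1 - q) * |t| :=
        mul_le_mul_of_nonneg_right hE1 (abs_nonneg t)
    _ = |t| / (1 - q) := by ring

end

section

variable {q x t : ℝ} (hq0 : 0 < q) (hq1 : q < 1) (hx : 0 ≤ x)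

include hq0 hq1 hx in
lemma mq_summable_uncurry {z : ℝ} (hz0 : 0 ≤ z) (hz1 : z < 1) :
    Summable (Function.uncurry fun (k n : ℕ) =>
      (-1) ^ k * z ^ k * (((1 - q ^ ((k : ℝ) + x)) / (1 - q) * t) ^ n / (n.factorial : ℝ))) := by
  refine Summable.of_abs ?_
  have habs : (fun p : ℕ × ℕ => |Function.uncurry (fun (k n : ℕ) =>
      (-1) ^ k * z ^ k * (((1 - q ^ ((k : ℝ) + x)) / (1 - q) * t) ^ n / (n.factorial : ℝ))) p|)
      = fun p : ℕ × ℕ => z ^ p.1 *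
        (|(1 - q ^ ((p.1 : ℝ) + x)) / (1 - q) * t| ^ p.2 / (p.2.factorial : ℝ)) := by
    funext p
    rw [Function.uncurry]
    rw [abs_mul, abs_mul, abs_pow, abs_pow, abs_neg, abs_one, one_pow, one_mul,
      abs_of_nonneg hz0, abs_div, abs_pow, Nat.abs_cast]
  rw [habs]
  refine (summable_prod_of_nonneg ?_).mpr ⟨fun k => ?_, ?_⟩
  · intro p; positivity
  · show Summable fun n : ℕ => z ^ k *
        (|(1 - q ^ ((k : ℝ) + x)) / (1 - q) * t| ^ n / (n.factorial : ℝ))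
    exact (Real.summable_pow_div_factorial _).mul_left _
  · show Summable fun k : ℕ => ∑' n : ℕ, z ^ k *
        (|(1 - q ^ ((k : ℝ) + x)) / (1 - q) * t| ^ n / (n.factorial : ℝ))
    have hts : ∀ k : ℕ, (∑' n : ℕ,
        z ^ k * (|(1 - q ^ ((k : ℝ) + x)) / (1 - q) * t| ^ n / (n.factorial : ℝ)))
        = z ^ k * Real.exp |(1 - q ^ ((k : ℝ) + x)) / (1 - q) * t| := by
      intro k
      rw [tsum_mul_left, (mq_exp_hasSum _).tsum_eq]
    simp only [hts]
    refine Summable.of_nonneg_of_le (fun k => ?_) (fun k => ?_)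
      ((summable_geometric_of_lt_one hz0 hz1).mul_right (Real.exp (|t| / (1 - q))))
    · positivity
    · exact mul_le_mul_of_nonneg_left
        (Real.exp_le_exp.mpr (mqE_abs_le hq0 hq1 hx k)) (by positivity)

include hq0 hq1 hx in
lemma mq_swap {z : ℝ} (hz0 : 0 ≤ z) (hz1 : z < 1) :
    (∑' k : ℕ, (-1) ^ k * z ^ k * Real.exp ((1 - q ^ ((k : ℝ) + x)) / (1 - q) * t))
      = ∑' n : ℕ, mqA q x t z n := by
  calc (∑' k : ℕ, (-1) ^ k * z ^ k * Real.exp ((1 - q ^ ((k : ℝ) + x)) / (1 - q) * t))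
      = ∑' (k : ℕ) (n : ℕ),
        (-1) ^ k * z ^ k * (((1 - q ^ ((k : ℝ) + x)) / (1 - q) * t) ^ n / (n.factorial : ℝ)) :=
      tsum_congr fun k =>
        ((mq_exp_hasSum ((1 - q ^ ((k : ℝ) + x)) / (1 - q) * t)).mul_left
          ((-1) ^ k * z ^ k)).tsum_eq.symm
    _ = ∑' (n : ℕ) (k : ℕ),
        (-1) ^ k * z ^ k * (((1 - q ^ ((k : ℝ) + x)) / (1 - q) * t) ^ n / (n.factorial : ℝ)) :=
      (Summable.tsum_comm (mq_summable_uncurry hq0 hq1 hx hz0 hz1)).symm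
    _ = ∑' n : ℕ, mqA q x t z n := by
      refine tsum_congr fun n => ?_
      have h1 : ∀ k : ℕ,
          (-1) ^ k * z ^ k * (((1 - q ^ ((k : ℝ) + x)) / (1 - q) * t) ^ n / (n.factorial : ℝ))
          = (-1) ^ k * z ^ k * ((1 - q ^ ((k : ℝ) + x)) / (1 - q) * t) ^ n / (n.factorial : ℝ) :=
        fun k => (mul_div_assoc _ _ _).symm
      simp only [h1]
      exact (mqA_hasSum hq0 hq1 hx hz0 hz1 n).tsum_eq

end

/-- The generating function identity
`F_q(t,x) = ∑_{n≥0} 𝓔_{n,q}(x) t^n/n! = [2]_q ∑_{k≥0} (-1)^k e^{[k+x]_q t}`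
in the Abel sense: the exponential generating series converges absolutely, the series
`∑ (-1)^k z^k exp([k+x]_q t)` converges absolutely for `0 ≤ z < 1`, and `[2]_q` times
its sum tends to `F_q(t,x)` as `z → 1⁻`. -/
theorem modqEulerPoly_generating_function (q x t : ℝ) (hq0 : 0 < q) (hq1 : q < 1)
    (hx : 0 ≤ x) :
    (Summable fun n : ℕ => |modqEulerPoly q n x * t ^ n / (n.factorial : ℝ)|) ∧
    (∀ z : ℝ, 0 ≤ z → z < 1 →
      Summable fun k : ℕ =>
        |(-1) ^ k * z ^ k * Real.exp ((1 - q ^ ((k : ℝ) + x)) / (1 - q) * t)|) ∧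
    Filter.Tendsto
      (fun z : ℝ =>
        (1 + q) * ∑' k : ℕ, (-1) ^ k * z ^ k * Real.exp ((1 - q ^ ((k : ℝ) + x)) / (1 - q) * t))
      (nhdsWithin 1 (Set.Ico 0 1))
      (nhds (∑' n : ℕ, modqEulerPoly q n x * t ^ n / (n.factorial : ℝ))) := by
  have hq' : (0:ℝ) < 1 - q := by linarith
  have hEn : ∀ n : ℕ, modqEulerPoly q n x * t ^ n / (n.factorial : ℝ)
      = (1 + q) * mqA q x t 1 n := by
    intro n
    rw [modqEulerPoly, mqA]
    simp only [one_mul]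
    rw [Finset.mul_sum, Finset.mul_sum, Finset.mul_sum, Finset.sum_mul, Finset.sum_div]
    refine Finset.sum_congr rfl fun l _ => by ring
  refine ⟨?_, ?_, ?_⟩
  · refine Summable.of_nonneg_of_le (fun n => abs_nonneg _) (fun n => ?_)
      ((Real.summable_pow_div_factorial (2 * |t| / (1 - q))).mul_left (1 + q))
    rw [hEn n, abs_mul, abs_of_nonneg (by positivity : (0:ℝ) ≤ 1 + q)]
    exact mul_le_mul_of_nonneg_left (mqA_bound hq0 hq1 hx zero_le_one n) (by positivity)
  · intro z hz0 hz1
    refine Summable.of_nonneg_of_le (fun k => abs_nonneg _) (fun k => ?_)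
      ((summable_geometric_of_lt_one hz0 hz1).mul_right (Real.exp (|t| / (1 - q))))
    rw [abs_mul, abs_mul, abs_pow, abs_pow, abs_neg, abs_one, one_pow, one_mul,
      abs_of_nonneg hz0]
    refine mul_le_mul_of_nonneg_left ?_ (by positivity)
    rw [Real.abs_exp]
    exact Real.exp_le_exp.mpr (le_trans (le_abs_self _) (mqE_abs_le hq0 hq1 hx k))
  · have htsum_eq : (∑' n : ℕ, modqEulerPoly q n x * t ^ n / (n.factorial : ℝ))
        = (1 + q) * ∑' n : ℕ, mqA q x t 1 n := by
      rw [← tsum_mul_left]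
      exact tsum_congr hEn
    rw [htsum_eq]
    have htendA : Filter.Tendsto (fun z : ℝ => ∑' n : ℕ, mqA q x t z n)
        (nhdsWithin 1 (Set.Ico 0 1)) (nhds (∑' n : ℕ, mqA q x t 1 n)) := by
      refine tendsto_tsum_of_dominated_convergence
        (Real.summable_pow_div_factorial (2 * |t| / (1 - q))) (fun n => ?_) ?_
      · have hten : Filter.Tendsto
            (fun z : ℝ => (1 / (1 - q)) ^ n * t ^ n / (n.factorial : ℝ) *
              ∑ l ∈ Finset.range (n + 1),
                (n.choose l : ℝ) * (-1) ^ l * q ^ ((l : ℝ) * x) / (1 + z * q ^ l))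
            (nhdsWithin 1 (Set.Ico 0 1)) (nhds (mqA q x t 1 n)) := by
          rw [mqA]
          refine Filter.Tendsto.const_mul _ ?_
          refine tendsto_finset_sum _ fun l _ => ?_
          have hcont : ContinuousAt
              (fun z : ℝ => (n.choose l : ℝ) * (-1) ^ l * q ^ ((l : ℝ) * x) / (1 + z * q ^ l))
              1 := by
            refine ContinuousAt.div continuousAt_const
              (Continuous.continuousAt (by continuity)) ?_
            have : (0:ℝ) < 1 + 1 * q ^ l := by positivity
            exact ne_of_gt this
          exact hcont.tendsto.mono_left nhdsWithin_le_nhds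
        exact hten
      · filter_upwards [self_mem_nhdsWithin] with z hz
        intro n
        rw [Real.norm_eq_abs]
        exact mqA_bound hq0 hq1 hx hz.1 n
    have hmul := htendA.const_mul (1 + q)
    refine Filter.Tendsto.congr' ?_ hmul
    filter_upwards [self_mem_nhdsWithin] with z hz
    rw [mq_swap hq0 hq1 hx hz.1 hz.2]
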